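/- Let f(1+x) = Σ_{n≥0} a_n x^n ∈ 1 + xF_p[[x]] be an endomorphism of the group of 1-units U. Then for every m ≥ 0 the identity a_m · f(1+x) = D^{(m)}f(1+x) · (1+x)^m holds in F_p[[x]], where D^{(m)} denotes the m-th Hasse derivative. -/

import Mathlib

open PowerSeries

/-- Substitution of a two-variable power series `x` (with zero constant term) into the
one-variable power series `f`, computed coefficientwise. -/
noncomputable def applyMv {R : Type*} [CommRing R] (f : PowerSeries R)
    (x : MvPowerSeries (Fin 2) R) : MvPowerSeries (Fin 2) R :=
  fun d => ∑ n ∈ Finset.range (d 0 + d 1 + 1),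
    PowerSeries.coeff n f * MvPowerSeries.coeff d (x ^ n)

/-- The `m`-th Hasse derivative of a power series `Σ aₙ xⁿ`, namely `Σ_{n≥m} C(n,m) aₙ x^{n-m}`. -/
noncomputable def hasseDeriv {R : Type*} [CommRing R] (m : ℕ) (f : PowerSeries R) :
    PowerSeries R :=
  PowerSeries.mk fun i => ((i + m).choose m : R) * coeff (i + m) f

lemma pair_eq_iff (d : Fin 2 →₀ ℕ) (a b : ℕ) :
    d = Finsupp.single (0 : Fin 2) a + Finsupp.single 1 b ↔ d 0 = a ∧ d 1 = b := by
  constructor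
  · rintro rfl
    simp [Finsupp.single_apply]
  · rintro ⟨h0, h1⟩
    ext i
    fin_cases i <;> simp_all [Finsupp.single_apply]

section Aux

variable {R : Type*} [CommRing R]

lemma applyMv_coeff (f : PowerSeries R) (x : MvPowerSeries (Fin 2) R) (d : Fin 2 →₀ ℕ) :
    MvPowerSeries.coeff d (applyMv f x) = ∑ n ∈ Finset.range (d 0 + d 1 + 1),
      PowerSeries.coeff n f * MvPowerSeries.coeff d (x ^ n) := rfl

lemma applyMv_X0 (f : PowerSeries R) (d : Fin 2 →₀ ℕ) :
    MvPowerSeries.coeff d (applyMv f (MvPowerSeries.X 0)) =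
      if d 1 = 0 then PowerSeries.coeff (d 0) f else 0 := by
  rw [MvPowerSeries.coeff_apply]
  show (∑ n ∈ Finset.range (d 0 + d 1 + 1), _) = _
  have : ∀ n : ℕ, MvPowerSeries.coeff d ((MvPowerSeries.X (0 : Fin 2) : MvPowerSeries (Fin 2) R) ^ n)
      = if d 0 = n ∧ d 1 = 0 then 1 else 0 := by
    intro n
    rw [MvPowerSeries.coeff_X_pow]
    congr 1
    rw [show Finsupp.single (0 : Fin 2) n = Finsupp.single 0 n + Finsupp.single 1 0 by simp]
    rw [pair_eq_iff]
  simp only [this]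
  rw [Finset.sum_eq_single (d 0)]
  · by_cases h : d 1 = 0 <;> simp [h]
  · intro b _ hb
    simp [Ne.symm hb]
  · intro h
    simp only [Finset.mem_range] at h
    omega

lemma applyMv_X1 (f : PowerSeries R) (d : Fin 2 →₀ ℕ) :
    MvPowerSeries.coeff d (applyMv f (MvPowerSeries.X 1)) =
      if d 0 = 0 then PowerSeries.coeff (d 1) f else 0 := by
  rw [MvPowerSeries.coeff_apply]
  show (∑ n ∈ Finset.range (d 0 + d 1 + 1), _) = _
  have : ∀ n : ℕ, MvPowerSeries.coeff d ((MvPowerSeries.X (1 : Fin 2) : MvPowerSeries (Fin 2) R) ^ n)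
      = if d 0 = 0 ∧ d 1 = n then 1 else 0 := by
    intro n
    rw [MvPowerSeries.coeff_X_pow]
    congr 1
    rw [show Finsupp.single (1 : Fin 2) n = Finsupp.single 0 0 + Finsupp.single 1 n by simp]
    rw [pair_eq_iff]
  simp only [this]
  rw [Finset.sum_eq_single (d 1)]
  · by_cases h : d 0 = 0 <;> simp [h]
  · intro b _ hb
    simp [Ne.symm hb]
  · intro h
    simp only [Finset.mem_range] at h
    omega

set_option maxHeartbeats 1000000 in
lemma coeff_lhs (f : PowerSeries R) (k m : ℕ) :
    MvPowerSeries.coeff (Finsupp.single (0 : Fin 2) k + Finsupp.single 1 m)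
      (applyMv f (MvPowerSeries.X 0) * applyMv f (MvPowerSeries.X 1)) =
      PowerSeries.coeff k f * PowerSeries.coeff m f := by
  rw [MvPowerSeries.coeff_mul]
  rw [Finset.sum_eq_single (Finsupp.single (0 : Fin 2) k, Finsupp.single (1 : Fin 2) m)]
  · rw [applyMv_X0, applyMv_X1]
    simp [Finsupp.single_apply]
  · rintro ⟨u, v⟩ hmem hne
    rw [Finset.HasAntidiagonal.mem_antidiagonal] at hmem
    rw [applyMv_X0, applyMv_X1]
    by_cases h1 : u 1 = 0
    · by_cases h2 : v 0 = 0
      · exfalso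
        apply hne
        have e0 : u 0 + v 0 = k := by
          have := congrArg (fun g : Fin 2 →₀ ℕ => g 0) hmem
          simpa [Finsupp.single_apply] using this
        have e1 : u 1 + v 1 = m := by
          have := congrArg (fun g : Fin 2 →₀ ℕ => g 1) hmem
          simpa [Finsupp.single_apply] using this
        have hu : u = Finsupp.single (0 : Fin 2) k := by
          rw [show Finsupp.single (0 : Fin 2) k = Finsupp.single 0 k + Finsupp.single 1 0 by simp,
            pair_eq_iff]
          omega
        have hv : v = Finsupp.single (1 : Fin 2) m := by
          rw [show Finsupp.single (1 : Fin 2) m = Finsupp.single 0 0 + Finsupp.single 1 m by simp,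
            pair_eq_iff]
          omega
        rw [hu, hv]
      · simp [h2]
    · simp [h1]
  · intro h
    simp [Finset.mem_antidiagonal] at h

lemma coeff_X0X1 (d : Fin 2 →₀ ℕ) (a b : ℕ) :
    MvPowerSeries.coeff d ((MvPowerSeries.X 0 : MvPowerSeries (Fin 2) R) ^ a *
      (MvPowerSeries.X 1) ^ b) = if d 0 = a ∧ d 1 = b then 1 else 0 := by
  rw [MvPowerSeries.X_pow_eq, MvPowerSeries.X_pow_eq, MvPowerSeries.monomial_mul_monomial,
    one_mul, MvPowerSeries.coeff_monomial]
  congr 1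
  rw [pair_eq_iff]

lemma coeff_z_pow (n k m : ℕ) (hn : n ≤ k + m) :
    MvPowerSeries.coeff (Finsupp.single (0 : Fin 2) k + Finsupp.single 1 m)
      ((MvPowerSeries.X 0 * MvPowerSeries.X 1 + MvPowerSeries.X 0 + MvPowerSeries.X 1 :
        MvPowerSeries (Fin 2) R) ^ n)
      = (n.choose m : R) * (m.choose (k + m - n) : R) := by
  have hd0 : ((Finsupp.single (0 : Fin 2) k + Finsupp.single 1 m) : Fin 2 →₀ ℕ) 0 = k := by
    simp [Finsupp.single_apply]
  have hd1 : ((Finsupp.single (0 : Fin 2) k + Finsupp.single 1 m) : Fin 2 →₀ ℕ) 1 = m := by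
    simp [Finsupp.single_apply]
  have hz : (MvPowerSeries.X 0 * MvPowerSeries.X 1 + MvPowerSeries.X 0 + MvPowerSeries.X 1 :
      MvPowerSeries (Fin 2) R) = MvPowerSeries.X 0 + MvPowerSeries.X 1 * (1 + MvPowerSeries.X 0) := by
    ring
  rw [hz, add_pow, map_sum]
  have key : ∀ j ∈ Finset.range (n + 1),
      MvPowerSeries.coeff (Finsupp.single (0 : Fin 2) k + Finsupp.single 1 m)
        ((MvPowerSeries.X 0 : MvPowerSeries (Fin 2) R) ^ j *
          (MvPowerSeries.X 1 * (1 + MvPowerSeries.X 0)) ^ (n - j) * (n.choose j : MvPowerSeries (Fin 2) R))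
      = ∑ i ∈ Finset.range (n - j + 1),
          (if k = j + i ∧ m = n - j then (((n-j).choose i : R) * (n.choose j : R)) else 0) := by
    intro j hj
    rw [mul_pow]
    have hone : ((1 + MvPowerSeries.X 0 : MvPowerSeries (Fin 2) R)) ^ (n - j)
        = ∑ i ∈ Finset.range (n - j + 1),
            (MvPowerSeries.X 0 : MvPowerSeries (Fin 2) R) ^ i * ((n-j).choose i : MvPowerSeries (Fin 2) R) := by
      rw [add_comm, add_pow]
      simp
    rw [hone, Finset.mul_sum, Finset.mul_sum, Finset.sum_mul, map_sum]
    refine Finset.sum_congr rfl fun i _ => ?_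
    have : (MvPowerSeries.X 0 : MvPowerSeries (Fin 2) R) ^ j *
        ((MvPowerSeries.X 1) ^ (n - j) * ((MvPowerSeries.X 0) ^ i * ((n-j).choose i : MvPowerSeries (Fin 2) R))) *
        (n.choose j : MvPowerSeries (Fin 2) R)
        = ((MvPowerSeries.X 0) ^ (j + i) * (MvPowerSeries.X 1) ^ (n - j)) *
            MvPowerSeries.C (((n-j).choose i : R) * (n.choose j : R)) := by
      rw [pow_add, map_mul, ← map_natCast (MvPowerSeries.C (σ := Fin 2) (R := R)) ((n-j).choose i),
        ← map_natCast (MvPowerSeries.C (σ := Fin 2) (R := R)) (n.choose j)]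
      ring
    rw [this, MvPowerSeries.coeff_mul_C, coeff_X0X1, hd0, hd1, ite_mul, zero_mul, one_mul]
  rw [Finset.sum_congr rfl key]
  rw [Finset.sum_eq_single (n - m)]
  · by_cases hm : m ≤ n
    · rw [show n - (n - m) = m from by omega, Nat.choose_symm hm]
      rw [Finset.sum_eq_single (k - (n - m))]
      · rw [if_pos ⟨by omega, rfl⟩, show k - (n - m) = k + m - n from by omega]
        ring
      · intro i _ hi
        rw [if_neg]
        rintro ⟨h3, -⟩
        omega
      · intro h
        simp only [Finset.mem_range] at h
        rw [if_pos ⟨by omega, rfl⟩, Nat.choose_eq_zero_of_lt (by omega)]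
        simp
    · have hc : n.choose m = 0 := Nat.choose_eq_zero_of_lt (by omega)
      rw [hc, Nat.cast_zero, zero_mul]
      apply Finset.sum_eq_zero
      intro i _
      rw [if_neg]
      rintro ⟨-, h2⟩
      omega
  · intro j hj hjne
    simp only [Finset.mem_range] at hj
    apply Finset.sum_eq_zero
    intro i _
    rw [if_neg]
    rintro ⟨-, h2⟩
    omega
  · intro h
    simp only [Finset.mem_range] at h
    omega

lemma coeff_rhs (f : PowerSeries R) (k m : ℕ) :
    MvPowerSeries.coeff (Finsupp.single (0 : Fin 2) k + Finsupp.single 1 m)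
      (applyMv f (MvPowerSeries.X 0 * MvPowerSeries.X 1 + MvPowerSeries.X 0 + MvPowerSeries.X 1)) =
      ∑ n ∈ Finset.range (k + m + 1),
        PowerSeries.coeff n f * ((n.choose m : R) * (m.choose (k + m - n) : R)) := by
  have hd0 : ((Finsupp.single (0 : Fin 2) k + Finsupp.single 1 m) : Fin 2 →₀ ℕ) 0 = k := by
    simp [Finsupp.single_apply]
  have hd1 : ((Finsupp.single (0 : Fin 2) k + Finsupp.single 1 m) : Fin 2 →₀ ℕ) 1 = m := by
    simp [Finsupp.single_apply]
  rw [applyMv_coeff, hd0, hd1]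
  refine Finset.sum_congr rfl fun n hn => ?_
  simp only [Finset.mem_range] at hn
  rw [coeff_z_pow n k m (by omega)]

lemma coeff_one_add_X_pow (m j : ℕ) :
    PowerSeries.coeff j ((1 + PowerSeries.X : PowerSeries R) ^ m) = (m.choose j : R) := by
  rw [add_comm, add_pow, map_sum]
  have : ∀ i ∈ Finset.range (m + 1),
      PowerSeries.coeff j ((PowerSeries.X : PowerSeries R) ^ i * 1 ^ (m - i) * (m.choose i : PowerSeries R))
      = if j = i then (m.choose i : R) else 0 := by
    intro i _
    rw [one_pow, mul_one, ← map_natCast (PowerSeries.C (R := R)) (m.choose i), PowerSeries.coeff_mul_C,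
      PowerSeries.coeff_X_pow, ite_mul, zero_mul, one_mul]
  rw [Finset.sum_congr rfl this, Finset.sum_eq_single j]
  · simp
  · intro b _ hb
    simp [Ne.symm hb]
  · intro h
    simp only [Finset.mem_range] at h
    rw [if_pos rfl, Nat.choose_eq_zero_of_lt (by omega), Nat.cast_zero]

end Aux

/-- Let `f(1+x) = Σ aₙ xⁿ ∈ 1 + x F_p[[x]]` be an endomorphism of the group of 1-units,
i.e. `f((1+x)(1+y)) = f(1+x) f(1+y)` as formal power series in two variables.  Then for every
`m ≥ 0` one has `aₘ · f(1+x) = D^(m) f(1+x) · (1+x)^m` in `F_p[[x]]`, where `D^(m)` is the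
`m`-th Hasse derivative. -/
theorem oneUnitEndo_hasse_identity {p : ℕ} [Fact p.Prime] (f : PowerSeries (ZMod p))
    (hconst : constantCoeff f = 1)
    (hf : applyMv f (MvPowerSeries.X 0) * applyMv f (MvPowerSeries.X 1) =
      applyMv f (MvPowerSeries.X 0 * MvPowerSeries.X 1 + MvPowerSeries.X 0 + MvPowerSeries.X 1)) :
    ∀ m : ℕ, PowerSeries.C (coeff m f) * f
      = hasseDeriv m f * (1 + X) ^ m := by
  intro m
  ext k
  have H : PowerSeries.coeff k f * PowerSeries.coeff m f
      = ∑ n ∈ Finset.range (k + m + 1), PowerSeries.coeff n f *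
          ((n.choose m : ZMod p) * (m.choose (k + m - n) : ZMod p)) := by
    have := congrArg (MvPowerSeries.coeff (Finsupp.single (0 : Fin 2) k + Finsupp.single 1 m)) hf
    rwa [coeff_lhs, coeff_rhs] at this
  rw [PowerSeries.coeff_C_mul, PowerSeries.coeff_mul]
  rw [Finset.Nat.sum_antidiagonal_eq_sum_range_succ_mk]
  simp only [hasseDeriv, PowerSeries.coeff_mk, coeff_one_add_X_pow]
  -- reduce RHS sum from range (k+m+1) to the shifted sum
  have split : ∑ n ∈ Finset.range (k + m + 1), PowerSeries.coeff n f *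
          ((n.choose m : ZMod p) * (m.choose (k + m - n) : ZMod p))
      = ∑ i ∈ Finset.range (k + 1), ((i + m).choose m : ZMod p) *
          PowerSeries.coeff (i + m) f * (m.choose (k - i) : ZMod p) := by
    rw [Finset.range_eq_Ico, ← Finset.sum_Ico_consecutive _ (Nat.zero_le m) (by omega : m ≤ k + m + 1)]
    have h1 : ∑ n ∈ Finset.Ico 0 m, PowerSeries.coeff n f *
        ((n.choose m : ZMod p) * (m.choose (k + m - n) : ZMod p)) = 0 := by
      apply Finset.sum_eq_zero
      intro n hn
      simp only [Finset.mem_Ico] at hn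
      rw [Nat.choose_eq_zero_of_lt (by omega), Nat.cast_zero, zero_mul, mul_zero]
    rw [h1, zero_add, Finset.sum_Ico_eq_sum_range,
      show k + m + 1 - m = k + 1 from by omega]
    refine Finset.sum_congr rfl fun i hi => ?_
    rw [show m + i = i + m from by omega, show k + m - (i + m) = k - i from by omega]
    ring
  rw [mul_comm ((PowerSeries.coeff m) f), H, split]
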